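/- arXiv:1008.4831 — 4 statements merged into one kernel-verified Lean document; each statement's English description precedes it below -/
import Mathlib

section
/- The binary operation x ⊙ y = ⌊x⌋ + y on ℝ is strictly increasing in its first argument, associative, but not commutative; hence there is no strictly increasing Θ : ℝ → ℝ with Θ(x ⊙ y) = Θ(x) + Θ(y). -/
/-- The operation `x ⊙ y = ⌊x⌋ + y` is strictly increasing in its first
argument, associative, but not commutative; hence it admits no strictly
increasing additive regrade `Θ`. -/
theorem floor_add_counterexample (op : ℝ → ℝ → ℝ)
    (hop : ∀ x y : ℝ, op x y = (⌊x⌋ : ℝ) + y) :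
    (∀ x y z : ℝ, x < y → op z x < op z y) ∧
    (∀ x y z : ℝ, op (op x y) z = op x (op y z)) ∧
    (¬ ∀ x y : ℝ, op x y = op y x) ∧
    ¬ ∃ Θ : ℝ → ℝ, StrictMono Θ ∧ ∀ x y : ℝ, Θ (op x y) = Θ x + Θ y := by
  refine ⟨fun x y z h => by simp [hop]; linarith, fun x y z => ?_, fun h => ?_, ?_⟩
  · simp only [hop, Int.floor_intCast_add]
    push_cast
    ring
  · have := h 0 (1/2)
    simp [hop] at this
    norm_num at this
  · rintro ⟨Θ, hmono, hadd⟩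
    have h1 : Θ (op (1/2) (1/2)) = Θ (1/2) + Θ (1/2) := hadd _ _
    have h2 : op (1/2 : ℝ) (1/2) = 1/2 := by simp [hop]; norm_num
    have h3 : Θ (op 0 0) = Θ 0 + Θ 0 := hadd 0 0
    have h4 : op (0:ℝ) 0 = 0 := by simp [hop]
    rw [h2] at h1
    rw [h4] at h3
    have hΘh : Θ (1/2) = 0 := by linarith
    have hΘ0 : Θ 0 = 0 := by linarith
    have := hmono (show (0:ℝ) < 1/2 by norm_num)
    rw [hΘh, hΘ0] at this
    exact lt_irrefl 0 this
end

section
/- The binary operation x ⊙ y = x + ⌊y⌋ on ℝ is strictly increasing in its second argument, associative, but not commutative. -/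
/-- The operation `x ⊙ y = x + ⌊y⌋` is strictly increasing in its second
argument... (per the paper: preserves order under postfix combination),
associative, but not commutative. -/
theorem add_floor_counterexample (op : ℝ → ℝ → ℝ)
    (hop : ∀ x y : ℝ, op x y = x + (⌊y⌋ : ℝ)) :
    (∀ x y z : ℝ, x < y → op x z < op y z) ∧
    (∀ x y z : ℝ, op (op x y) z = op x (op y z)) ∧
    ¬ ∀ x y : ℝ, op x y = op y x := by
  refine ⟨fun x y z h => by simp [hop, h], fun x y z => ?_, fun h => ?_⟩
  · simp only [hop]
    rw [show y + (⌊z⌋ : ℝ) = y + (⌊z⌋ : ℤ) by push_cast; ring, Int.floor_add_intCast]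
    push_cast; ring
  · have := h (1/2) 0
    simp [hop] at this
    norm_num at this
end

section
/- The binary operation x ⊙ y = x² + y² on ℝ is commutative, continuous, and strictly increasing in each argument on the positive reals, but not associative; moreover there exists no function Θ : ℝ≥0 → ℝ satisfying Θ(x² + y²) = Θ(x) + Θ(y) for all x, y > 0. -/
/-- The operation `x ⊙ y = x² + y²` is commutative, continuous, strictly
increasing in each argument on the positive reals, but not associative, and
admits no (order-preserving) regrade `Θ` with `Θ(x²+y²) = Θ(x)+Θ(y)` for
positive `x, y`. -/
theorem sq_add_sq_counterexample (op : ℝ → ℝ → ℝ)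
    (hop : ∀ x y : ℝ, op x y = x ^ 2 + y ^ 2) :
    (∀ x y : ℝ, op x y = op y x) ∧
    Continuous (fun p : ℝ × ℝ => op p.1 p.2) ∧
    (∀ x y z : ℝ, 0 < x → x < y → 0 < z → op x z < op y z ∧ op z x < op z y) ∧
    (¬ ∀ x y z : ℝ, op (op x y) z = op x (op y z)) ∧
    ¬ ∃ Θ : ℝ → ℝ, StrictMonoOn Θ (Set.Ioi 0) ∧
      ∀ x y : ℝ, 0 < x → 0 < y → Θ (x ^ 2 + y ^ 2) = Θ x + Θ y := by
  refine ⟨fun x y => by rw [hop, hop]; ring, ?_, ?_, ?_, ?_⟩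
  · simp only [hop]
    fun_prop
  · intro x y z hx hxy hz
    have h : x ^ 2 < y ^ 2 := by nlinarith
    constructor <;> rw [hop, hop] <;> linarith
  · intro h
    have := h 2 0 0
    rw [hop, hop, hop, hop] at this
    norm_num at this
  · rintro ⟨Θ, hmono, heq⟩
    have s2 : (0:ℝ) < Real.sqrt 2 := Real.sqrt_pos.mpr (by norm_num)
    have s2sq : Real.sqrt 2 ^ 2 = 2 := Real.sq_sqrt (by norm_num)
    have h2 : Θ 2 = Θ 1 + Θ 1 := by
      have := heq 1 1 one_pos one_pos; norm_num at this; linarith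
    have h3 : Θ 3 = Θ 1 + Θ (Real.sqrt 2) := by
      have := heq 1 (Real.sqrt 2) one_pos s2
      rw [s2sq] at this; norm_num at this; linarith
    have h5 : Θ 5 = Θ 1 + Θ 2 := by
      have := heq 1 2 one_pos two_pos; norm_num at this; linarith
    have h8 : Θ 8 = Θ 2 + Θ 2 := by
      have := heq 2 2 two_pos two_pos; norm_num at this; linarith
    have h10 : Θ 10 = Θ 1 + Θ 3 := by
      have := heq 1 3 one_pos (by norm_num); norm_num at this; linarith
    have m1 : Θ 3 < Θ 5 := hmono (by norm_num) (by norm_num) (by norm_num)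
    have m2 : Θ 8 < Θ 10 := hmono (by norm_num) (by norm_num) (by norm_num)
    linarith
end

section
/- Suppose Ψ : ℝ → ℝ is positive, and satisfies Ψ(τ + ξ) + Ψ(τ + η) = Ψ(τ + ζ(ξ,η)) for all real τ, ξ, η, where ζ : ℝ × ℝ → ℝ is some fixed function independent of τ. If additionally Ψ is continuous, then there exist constants A ∈ ℝ and C > 0 such that Ψ(x) = C·exp(A·x) for all x. -/
/-- Product theorem (with continuity): a positive continuous `Ψ` satisfying
`Ψ(τ+ξ) + Ψ(τ+η) = Ψ(τ+ζ(ξ,η))` for all `τ, ξ, η` (with `ζ` independent of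
`τ`) must be of the form `Ψ(x) = C·exp(A·x)` with `C > 0`. -/
theorem product_theorem (Ψ : ℝ → ℝ) (ζ : ℝ → ℝ → ℝ)
    (hpos : ∀ x, 0 < Ψ x)
    (heq : ∀ τ ξ η : ℝ, Ψ (τ + ξ) + Ψ (τ + η) = Ψ (τ + ζ ξ η))
    (hcont : Continuous Ψ) :
    ∃ A C : ℝ, 0 < C ∧ ∀ x : ℝ, Ψ x = C * Real.exp (A * x) := by
  set c := ζ 0 0 with hc
  have h2 : ∀ τ, Ψ (τ + c) = 2 * Ψ τ := by
    intro τ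
    have := heq τ 0 0
    simp only [add_zero] at this
    linarith
  have hc0 : c ≠ 0 := by
    intro h
    have := h2 0
    rw [h, add_zero] at this
    have := hpos 0
    linarith
  set d := ζ 0 c with hd
  have h3 : ∀ τ, Ψ (τ + d) = 3 * Ψ τ := by
    intro τ
    have h := heq τ 0 c
    have h' := h2 τ
    simp only [add_zero] at h
    linarith
  set A := Real.log 2 / c with hA
  have hAc : A * c = Real.log 2 := by rw [hA]; field_simp
  set P := fun x : ℝ => Ψ x * Real.exp (-(A * x)) with hP
  have hPpos : ∀ x, 0 < P x := fun x => mul_pos (hpos x) (Real.exp_pos _)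
  have hPcont : Continuous P := by continuity
  have e2 : Real.exp (A * c) = 2 := by rw [hAc]; exact Real.exp_log (by norm_num)
  have hPc : ∀ x, P (x + c) = P x := by
    intro x
    simp only [hP]
    rw [h2 x, show -(A * (x + c)) = -(A * x) + -(A * c) by ring, Real.exp_add,
      Real.exp_neg (A * c), e2]
    ring
  -- P attains a max and a min, by periodicity (period |c|) and continuity.
  have hper : Function.Periodic P |c| := by
    rcases abs_choice c with h | h
    · rw [h]; exact hPc
    · rw [h]; intro x
      have := hPc (x + -c)
      simpa using this.symm
  have hTpos : 0 < |c| := abs_pos.mpr hc0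
  obtain ⟨x₀, _, hx₀⟩ := (isCompact_Icc (a := (0:ℝ)) (b := |c|)).exists_isMaxOn
    (Set.nonempty_Icc.mpr hTpos.le) hPcont.continuousOn
  obtain ⟨x₁, _, hx₁⟩ := (isCompact_Icc (a := (0:ℝ)) (b := |c|)).exists_isMinOn
    (Set.nonempty_Icc.mpr hTpos.le) hPcont.continuousOn
  have hmax : ∀ x, P x ≤ P x₀ := by
    intro x
    obtain ⟨y, hy, hxy⟩ := hper.exists_mem_Ico₀ hTpos x
    rw [hxy]
    exact hx₀ (Set.mem_Icc.mpr ⟨hy.1, hy.2.le⟩)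
  have hmin : ∀ x, P x₁ ≤ P x := by
    intro x
    obtain ⟨y, hy, hxy⟩ := hper.exists_mem_Ico₀ hTpos x
    rw [hxy]
    exact hx₁ (Set.mem_Icc.mpr ⟨hy.1, hy.2.le⟩)
  set lam := 3 * Real.exp (-(A * d)) with hlam
  have hPd' : ∀ x, P (x + d) = lam * P x := by
    intro x
    simp only [hP]
    rw [h3 x, mul_add, neg_add, Real.exp_add, hlam]
    ring
  have hlam1 : lam = 1 := by
    have h1 : lam * P x₀ ≤ P x₀ := by rw [← hPd' x₀]; exact hmax _
    have h2' : P x₁ ≤ lam * P x₁ := by rw [← hPd' x₁]; exact hmin _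
    have p0 := hPpos x₀
    have p1 := hPpos x₁
    nlinarith
  have hPd : ∀ x, P (x + d) = P x := by
    intro x; rw [hPd' x, hlam1, one_mul]
  -- From lam = 1: A * d = log 3
  have hAd : A * d = Real.log 3 := by
    have h3' : Real.exp (-(A * d)) = 1 / 3 := by
      rw [hlam] at hlam1; linarith
    have h4 := congrArg Real.log h3'
    rw [Real.log_exp, one_div, Real.log_inv] at h4
    linarith
  -- The subgroup generated by c and d
  set S : AddSubgroup ℝ := AddSubgroup.closure {c, d} with hS
  have hSper : ∀ p ∈ S, ∀ x, P (x + p) = P x := by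
    intro p hp
    induction hp using AddSubgroup.closure_induction with
    | mem y hy =>
      rcases hy with h | h
      · subst h; exact hPc
      · subst h; exact hPd
    | zero => intro x; simp
    | add y z _ _ ihy ihz =>
      intro x
      rw [← add_assoc, ihz, ihy]  -- careful: names
    | neg y _ ihy =>
      intro x
      have := ihy (x + -y)
      simpa using this.symm
  -- S is dense: otherwise cyclic, contradicting irrationality of log 3 / log 2
  have hdense : Dense (S : Set ℝ) := by
    rcases S.dense_or_cyclic with h | ⟨a, ha⟩
    · exact h
    · exfalso
      have hcS : c ∈ S := AddSubgroup.subset_closure (by simp)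
      have hdS : d ∈ S := AddSubgroup.subset_closure (by simp)
      rw [ha, AddSubgroup.mem_closure_singleton] at hcS hdS
      obtain ⟨k, hk⟩ := hcS
      obtain ⟨l, hl⟩ := hdS
      have ha0 : a ≠ 0 := by
        intro h; rw [h] at hk; simp at hk; exact hc0 hk.symm
      have hk0 : k ≠ 0 := by
        intro h; rw [h] at hk; simp at hk; exact hc0 hk.symm
      -- d * log 2 = c * log 3
      have key : d * Real.log 2 = c * Real.log 3 := by
        have h1 : A * c = Real.log 2 := hAc
        have h2' : A * d = Real.log 3 := hAd
        calc d * Real.log 2 = d * (A * c) := by rw [h1]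
        _ = (A * d) * c := by ring
        _ = c * Real.log 3 := by rw [h2']; ring
      rw [← hk, ← hl] at key
      have key2 : (l : ℝ) * Real.log 2 = (k : ℝ) * Real.log 3 := by
        have h5 : (l : ℝ) * a * Real.log 2 = (k : ℝ) * a * Real.log 3 := by
          simpa [zsmul_eq_mul] using key
        have h6 : a * ((l:ℝ) * Real.log 2) = a * ((k:ℝ) * Real.log 3) := by
          linear_combination h5
        exact mul_left_cancel₀ ha0 h6
      -- take absolute values; k ≠ 0
      have hlog2 : (0:ℝ) < Real.log 2 := Real.log_pos (by norm_num)
      have hlog3 : (0:ℝ) < Real.log 3 := Real.log_pos (by norm_num)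
      have key3 : (l.natAbs : ℝ) * Real.log 2 = (k.natAbs : ℝ) * Real.log 3 := by
        have := congrArg abs key2
        rwa [abs_mul, abs_mul, abs_of_pos hlog2, abs_of_pos hlog3,
          ← Int.cast_abs, ← Int.cast_abs, Int.abs_eq_natAbs, Int.abs_eq_natAbs,
          Int.cast_natCast, Int.cast_natCast] at this
      set m := k.natAbs with hm
      set n := l.natAbs with hn
      have hm0 : m ≠ 0 := Int.natAbs_ne_zero.mpr hk0
      have hn0 : n ≠ 0 := by
        intro h
        rw [h, Nat.cast_zero, zero_mul] at key3
        have hmpos : (0:ℝ) < (m : ℝ) := by exact_mod_cast Nat.pos_of_ne_zero hm0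
        nlinarith
      -- 2 ^ n = 3 ^ m in ℕ
      have hpow : (2:ℝ) ^ n = 3 ^ m := by
        have h7 : Real.exp (Real.log ((2:ℝ) ^ n)) = Real.exp (Real.log ((3:ℝ) ^ m)) := by
          rw [Real.log_pow, Real.log_pow]
          norm_num
          rw [key3]
        rwa [Real.exp_log (by positivity), Real.exp_log (by positivity)] at h7
      have hpowN : (2:ℕ) ^ n = 3 ^ m := by
        have : ((2^n : ℕ) : ℝ) = ((3^m : ℕ) : ℝ) := by push_cast; exact hpow
        exact_mod_cast this
      have h2dvd : 2 ∣ 3 ^ m := hpowN ▸ dvd_pow_self 2 hn0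
      have := Nat.Prime.dvd_of_dvd_pow Nat.prime_two h2dvd
      norm_num at this
  -- P is constant
  have hPconst : ∀ x, P x = P 0 := by
    intro x
    have : Set.EqOn P (fun _ => P 0) (closure (S : Set ℝ)) := by
      apply Set.EqOn.closure _ hPcont continuous_const
      intro p hp
      have := hSper p hp 0
      simpa using this
    have hx : x ∈ closure (S : Set ℝ) := hdense.closure_eq ▸ Set.mem_univ x
    exact this hx
  refine ⟨A, Ψ 0, hpos 0, fun x => ?_⟩
  have h1 : P x = P 0 := hPconst x
  simp only [hP] at h1
  simp only [mul_zero, neg_zero, Real.exp_zero, mul_one] at h1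
  have hexp : Real.exp (-(A * x)) > 0 := Real.exp_pos _
  calc Ψ x = Ψ x * Real.exp (-(A * x)) * Real.exp (A * x) := by
        rw [mul_assoc, ← Real.exp_add]; simp
  _ = Ψ 0 * Real.exp (A * x) := by rw [h1]
end
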